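/- Let μ be the distribution of the infinite-dimensional white noise ξ = Σ_{k∈ℕ} ξ_k f_k in the space 𝔊, and μ^{(n)} the distribution of the truncation ξ^{(n)} = Σ_{k=0}^n ξ_k f_k. Then the 2-Wasserstein distance satisfies 𝔚₂(μ^{(n)}, μ) ≤ 1/√n for every n ∈ ℕ*. -/

import Mathlib

open MeasureTheory ProbabilityTheory Filter

/-- The standard complex Gaussian distribution: the law of `(x+iy)/√2` for `x, y`
independent real standard Gaussians. -/
noncomputable def stdComplexGaussian : Measure ℂ :=
  ((gaussianReal 0 1).prod (gaussianReal 0 1)).map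
    (fun p : ℝ × ℝ => ((p.1 : ℂ) + p.2 * Complex.I) / Real.sqrt 2)

/-- The 2-Wasserstein-Kantorovich distance between two measures on a normed space:
infimum over couplings of the `L²` transport cost. -/
noncomputable def wasserstein2 {E : Type*} [NormedAddCommGroup E] [MeasurableSpace E]
    (ν₁ ν₂ : Measure E) : ENNReal :=
  ⨅ (κ : Measure (E × E)) (_ : κ.map Prod.fst = ν₁) (_ : κ.map Prod.snd = ν₂),
    (∫⁻ p : E × E, ENNReal.ofReal (‖p.1 - p.2‖ ^ 2) ∂κ) ^ (1 / 2 : ℝ)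

open Real in
lemma integral_sq_mul_exp : ∫ x : ℝ, x ^ 2 * rexp (-2⁻¹ * x ^ 2) = Real.sqrt (2 * π) := by
  have hpow : ∀ x : ℝ, x ^ (2:ℝ) = x ^ 2 := fun x => by
    rw [show (2:ℝ) = ((2:ℕ):ℝ) by norm_num, Real.rpow_natCast]
  have intSq : Integrable fun x : ℝ => x ^ 2 * rexp (-2⁻¹ * x ^ 2) := by
    have := integrable_rpow_mul_exp_neg_mul_sq (b := 2⁻¹) (by norm_num) (s := 2) (by norm_num)
    simpa only [hpow] using this
  have intE : Integrable fun x : ℝ => rexp (-2⁻¹ * x ^ 2) :=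
    integrable_exp_neg_mul_sq (by norm_num)
  have hderiv : ∀ x : ℝ, HasDerivAt (fun x : ℝ => -x * rexp (-2⁻¹ * x ^ 2))
      (x ^ 2 * rexp (-2⁻¹ * x ^ 2) - rexp (-2⁻¹ * x ^ 2)) x := by
    intro x
    have h1 : HasDerivAt (fun x : ℝ => -2⁻¹ * x ^ 2) (-2⁻¹ * (2 * x)) x := by
      have := (hasDerivAt_pow 2 x).const_mul (-2⁻¹ : ℝ)
      refine this.congr_deriv ?_
      simp
    have h2 := ((hasDerivAt_neg x).mul h1.exp)
    exact h2.congr_deriv (by ring)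
  have h2 : Tendsto (fun x : ℝ => x * rexp (-2⁻¹ * x ^ 2)) atTop (nhds 0) := by
    have hO := rpow_mul_exp_neg_mul_sq_isLittleO_exp_neg (b := 2⁻¹) (by norm_num) 1
    have hexp : Tendsto (fun x : ℝ => rexp (-(1/2) * x)) atTop (nhds 0) := by
      have := tendsto_exp_neg_atTop_nhds_zero.comp
        (Tendsto.const_mul_atTop (by norm_num : (0:ℝ) < 1/2) tendsto_id)
      refine this.congr fun x => ?_
      simp [Function.comp]
    simpa [Real.rpow_one] using hO.isBigO.trans_tendsto hexp
  have htop : Tendsto (fun x : ℝ => -x * rexp (-2⁻¹ * x ^ 2)) atTop (nhds 0) := by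
    simpa [neg_mul] using h2.neg
  have hbot : Tendsto (fun x : ℝ => -x * rexp (-2⁻¹ * x ^ 2)) atBot (nhds 0) := by
    refine (h2.comp tendsto_neg_atBot_atTop).congr fun x => ?_
    simp [Function.comp]
  have key := integral_of_hasDerivAt_of_tendsto hderiv (intSq.sub intE) hbot htop
  have hsub := integral_sub intSq intE
  rw [key] at hsub
  have hg : ∫ x : ℝ, rexp (-2⁻¹ * x ^ 2) = Real.sqrt (2 * π) := by
    have := integral_gaussian 2⁻¹
    rw [show π / 2⁻¹ = 2 * π by ring] at this
    exact this
  rw [hg] at hsub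
  linarith

open Real in
lemma lintegral_sq_gaussianReal :
    ∫⁻ x : ℝ, ENNReal.ofReal (x ^ 2) ∂(gaussianReal 0 1) = 1 := by
  have hpdf : ∀ x : ℝ, gaussianPDFReal 0 1 x = (Real.sqrt (2 * π))⁻¹ * rexp (-2⁻¹ * x ^ 2) := by
    intro x
    simp only [gaussianPDFReal, NNReal.coe_one, mul_one, sub_zero]
    ring_nf
  rw [gaussianReal_of_var_ne_zero 0 one_ne_zero,
    lintegral_withDensity_eq_lintegral_mul _ (measurable_gaussianPDF 0 1)
      (by fun_prop : Measurable fun x : ℝ => ENNReal.ofReal (x ^ 2))]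
  have heq : ∀ x : ℝ, (gaussianPDF 0 1 * fun x => ENNReal.ofReal (x ^ 2)) x
      = ENNReal.ofReal (gaussianPDFReal 0 1 x * x ^ 2) := by
    intro x
    simp only [Pi.mul_apply, gaussianPDF]
    rw [← ENNReal.ofReal_mul (gaussianPDFReal_nonneg 0 1 x)]
  rw [lintegral_congr heq, ← ofReal_integral_eq_lintegral_ofReal]
  · have : ∫ x : ℝ, gaussianPDFReal 0 1 x * x ^ 2
        = (Real.sqrt (2 * π))⁻¹ * ∫ x : ℝ, x ^ 2 * rexp (-2⁻¹ * x ^ 2) := by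
      rw [← integral_const_mul]
      congr 1
      ext x
      rw [hpdf x]; ring
    rw [this, integral_sq_mul_exp, inv_mul_cancel₀]
    · simp
    · positivity
  · have intSq : Integrable fun x : ℝ => x ^ 2 * rexp (-2⁻¹ * x ^ 2) := by
      have hpow : ∀ x : ℝ, x ^ (2:ℝ) = x ^ 2 := fun x => by
        rw [show (2:ℝ) = ((2:ℕ):ℝ) by norm_num, Real.rpow_natCast]
      have := integrable_rpow_mul_exp_neg_mul_sq (b := 2⁻¹) (by norm_num) (s := 2) (by norm_num)
      simpa only [hpow] using this
    have := intSq.const_mul (Real.sqrt (2 * π))⁻¹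
    refine this.congr ?_
    filter_upwards with x
    rw [hpdf x]; ring
  · filter_upwards with x
    exact mul_nonneg (gaussianPDFReal_nonneg 0 1 x) (sq_nonneg x)

lemma lintegral_normSq_stdComplexGaussian :
    ∫⁻ z : ℂ, ENNReal.ofReal (‖z‖ ^ 2) ∂stdComplexGaussian = 1 := by
  have hmap : Measurable (fun p : ℝ × ℝ => ((p.1 : ℂ) + p.2 * Complex.I) / Real.sqrt 2) := by
    fun_prop
  rw [stdComplexGaussian, lintegral_map (by fun_prop) hmap]
  have hpt : ∀ p : ℝ × ℝ, ‖((p.1 : ℂ) + p.2 * Complex.I) / (Real.sqrt 2 : ℝ)‖ ^ 2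
      = p.1 ^ 2 * 2⁻¹ + p.2 ^ 2 * 2⁻¹ := by
    intro p
    rw [norm_div]
    rw [div_pow]
    have h1 : ‖((p.1 : ℂ) + p.2 * Complex.I)‖ ^ 2 = p.1 ^ 2 + p.2 ^ 2 := by
      rw [Complex.sq_norm]
      exact Complex.normSq_add_mul_I p.1 p.2
    have h2 : ‖((Real.sqrt 2 : ℝ) : ℂ)‖ ^ 2 = 2 := by
      rw [Complex.norm_real]
      simp [Real.sq_sqrt]
    rw [h1, h2]
    ring
  calc ∫⁻ p : ℝ × ℝ, ENNReal.ofReal (‖((p.1 : ℂ) + p.2 * Complex.I) / (Real.sqrt 2 : ℝ)‖ ^ 2)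
        ∂((gaussianReal 0 1).prod (gaussianReal 0 1))
      = ∫⁻ p : ℝ × ℝ, (ENNReal.ofReal (p.1 ^ 2) * ENNReal.ofReal 2⁻¹
          + ENNReal.ofReal (p.2 ^ 2) * ENNReal.ofReal 2⁻¹)
        ∂((gaussianReal 0 1).prod (gaussianReal 0 1)) := by
        refine lintegral_congr fun p => ?_
        rw [hpt p, ENNReal.ofReal_add (by positivity) (by positivity),
          ENNReal.ofReal_mul (by positivity), ENNReal.ofReal_mul (by positivity)]
    _ = 1 := by
        rw [lintegral_add_left (by fun_prop)]
        rw [lintegral_mul_const _ (by fun_prop), lintegral_mul_const _ (by fun_prop)]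
        have hF : Measurable fun x : ℝ => ENNReal.ofReal (x ^ 2) := by fun_prop
        have hfst : ∫⁻ p : ℝ × ℝ, ENNReal.ofReal (p.1 ^ 2)
            ∂((gaussianReal 0 1).prod (gaussianReal 0 1)) = 1 := by
          have h := lintegral_map (μ := (gaussianReal 0 1).prod (gaussianReal 0 1)) hF
            measurable_fst
          rw [Measure.map_fst_prod] at h
          simp only [measure_univ, one_smul] at h
          rw [← h, lintegral_sq_gaussianReal]
        have hsnd : ∫⁻ p : ℝ × ℝ, ENNReal.ofReal (p.2 ^ 2)
            ∂((gaussianReal 0 1).prod (gaussianReal 0 1)) = 1 := by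
          have h := lintegral_map (μ := (gaussianReal 0 1).prod (gaussianReal 0 1)) hF
            measurable_snd
          rw [Measure.map_snd_prod] at h
          simp only [measure_univ, one_smul] at h
          rw [← h, lintegral_sq_gaussianReal]
        rw [hfst, hsnd, one_mul, ← ENNReal.ofReal_add (by positivity) (by positivity)]
        norm_num

lemma norm_sum_sq_eq {G : Type*} [NormedAddCommGroup G] [InnerProductSpace ℂ G] {f : ℕ → G}
    (hf : ∀ j k : ℕ, (inner ℂ (f j) (f k) : ℂ)
        = if j = k then ((1 / (1 + (k : ℝ) ^ 2) : ℝ) : ℂ) else 0)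
    (c : ℕ → ℂ) (F : Finset ℕ) :
    ‖∑ k ∈ F, c k • f k‖ ^ 2 = ∑ k ∈ F, ‖c k‖ ^ 2 * (1 / (1 + (k : ℝ) ^ 2)) := by
  have hinner : (inner ℂ (∑ k ∈ F, c k • f k) (∑ k ∈ F, c k • f k) : ℂ)
      = ((∑ k ∈ F, ‖c k‖ ^ 2 * (1 / (1 + (k : ℝ) ^ 2)) : ℝ) : ℂ) := by
    rw [sum_inner]
    have h1 : ∀ j ∈ F, (inner ℂ (c j • f j) (∑ k ∈ F, c k • f k) : ℂ)
        = ((‖c j‖ ^ 2 * (1 / (1 + (j : ℝ) ^ 2)) : ℝ) : ℂ) := by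
      intro j hj
      rw [inner_smul_left, inner_sum]
      have hsum : ∑ k ∈ F, (inner ℂ (f j) (c k • f k) : ℂ)
          = c j * ((1 / (1 + (j : ℝ) ^ 2) : ℝ) : ℂ) := by
        rw [Finset.sum_eq_single_of_mem j hj]
        · rw [inner_smul_right, hf j j, if_pos rfl]
        · intro k _ hkj
          rw [inner_smul_right, hf j k, if_neg (Ne.symm hkj), mul_zero]
      rw [hsum, ← mul_assoc]
      have hc : (starRingEnd ℂ) (c j) * c j = ((‖c j‖ ^ 2 : ℝ) : ℂ) := by
        rw [mul_comm, Complex.mul_conj, ← Complex.sq_norm]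
      rw [hc]
      push_cast
      ring
    rw [Finset.sum_congr rfl h1]
    push_cast
    ring
  have := inner_self_eq_norm_sq (𝕜 := ℂ) (∑ k ∈ F, c k • f k)
  rw [hinner] at this
  rw [show (RCLike.re : ℂ →+ ℝ) ((∑ k ∈ F, ‖c k‖ ^ 2 * (1 / (1 + (k:ℝ) ^ 2)) : ℝ) : ℂ)
      = ∑ k ∈ F, ‖c k‖ ^ 2 * (1 / (1 + (k:ℝ) ^ 2)) from Complex.ofReal_re _] at this
  exact this.symm

lemma sum_Ioc_le_inv {n : ℕ} (hn : 1 ≤ n) (m : ℕ) :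
    ∑ k ∈ Finset.Ioc n m, (1 / (1 + (k : ℝ) ^ 2)) ≤ 1 / (n : ℝ) := by
  rcases le_or_gt n m with h | h
  · have aux : ∀ m, n ≤ m → ∑ k ∈ Finset.Ioc n m, (1 / (1 + (k : ℝ) ^ 2))
        ≤ 1 / (n : ℝ) - 1 / (m : ℝ) := by
      intro m hm
      induction m, hm using Nat.le_induction with
      | base => simp
      | succ m hm ih =>
        rw [Finset.sum_Ioc_succ_top (by omega)]
        have hm1 : (1 : ℝ) ≤ (m : ℝ) := by
          exact_mod_cast le_trans hn hm
        have hstep : 1 / (1 + ((m + 1 : ℕ) : ℝ) ^ 2) ≤ 1 / (m : ℝ) - 1 / ((m : ℝ) + 1) := by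
          push_cast
          rw [div_sub_div _ _ (by linarith) (by linarith), one_mul, mul_one]
          rw [div_le_div_iff₀ (by positivity) (by positivity)]
          ring_nf
          nlinarith
        push_cast at hstep ⊢
        linarith
    have := aux m h
    have hmpos : (0 : ℝ) < (m : ℝ) := by
      exact_mod_cast lt_of_lt_of_le (by omega : 0 < n) h
    have : 1 / (m : ℝ) ≥ 0 := by positivity
    linarith [aux m h]
  · rw [Finset.Ioc_eq_empty (by omega)]
    simp

/-- with `ξ = Σ_k ξ_k f_k` the white noise in the completion `𝔊` (a Hilbert
space `G` in which the basis `(f_k)` is orthogonal with `⟨f_j,f_k⟩ = δ_{jk}/(1+k²)`), and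
`ξ⁽ⁿ⁾ = Σ_{k=0}^n ξ_k f_k` its truncation, the 2-Wasserstein distance between the laws
satisfies `𝔚₂(μ⁽ⁿ⁾, μ) ≤ 1/√n` for every `n ≥ 1`. -/
theorem wasserstein_truncated_white_noise {Ω : Type*} [MeasurableSpace Ω] (μ : Measure Ω)
    [IsProbabilityMeasure μ]
    {G : Type*} [NormedAddCommGroup G] [InnerProductSpace ℂ G] [CompleteSpace G]
    [MeasurableSpace G] [BorelSpace G]
    (f : ℕ → G)
    (hf : ∀ j k : ℕ, (inner ℂ (f j) (f k) : ℂ)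
        = if j = k then ((1 / (1 + (k : ℝ) ^ 2) : ℝ) : ℂ) else 0)
    (ξ : ℕ → Ω → ℂ) (hmeas : ∀ k, Measurable (ξ k))
    (hindep : iIndepFun ξ μ)
    (hlaw : ∀ k, μ.map (ξ k) = stdComplexGaussian)
    (ξlim : Ω → G) (hξlim : Measurable ξlim)
    (htendsto : ∀ᵐ ω ∂μ,
      Tendsto (fun n : ℕ => ∑ k ∈ Finset.range (n + 1), ξ k ω • f k) atTop (nhds (ξlim ω))) :
    ∀ n : ℕ, 1 ≤ n →
      wasserstein2 (μ.map (fun ω => ∑ k ∈ Finset.range (n + 1), ξ k ω • f k)) (μ.map ξlim)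
        ≤ ENNReal.ofReal (1 / Real.sqrt n) := by
  intro n hn
  set S : ℕ → Ω → G := fun m ω => ∑ k ∈ Finset.range (m + 1), ξ k ω • f k with hS
  have hSmeas : ∀ m, Measurable (S m) := by
    intro m
    have hT : Continuous fun v : Fin (m + 1) → ℂ => ∑ i : Fin (m + 1), v i • f i :=
      continuous_finset_sum _ fun i _ => (continuous_apply (i : Fin (m + 1))).smul
        continuous_const
    have hv : Measurable fun ω => (fun i : Fin (m + 1) => ξ i ω) :=
      measurable_pi_lambda _ fun i => hmeas i
    have hcomp : S m = (fun v : Fin (m + 1) → ℂ => ∑ i : Fin (m + 1), v i • f i)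
        ∘ (fun ω (i : Fin (m + 1)) => ξ i ω) := by
      funext ω
      simp only [hS, Function.comp]
      exact Finset.sum_range fun k => ξ k ω • f k
    rw [hcomp]
    exact hT.measurable.comp hv
  have hgoal : μ.map (fun ω => ∑ k ∈ Finset.range (n + 1), ξ k ω • f k) = μ.map (S n) := by
    rw [hS]
  rw [hgoal]
  have hpair : Measurable fun ω => (S n ω, ξlim ω) := (hSmeas n).prodMk hξlim
  set κ : Measure (G × G) := μ.map fun ω => (S n ω, ξlim ω) with hκ
  have hfst : κ.map Prod.fst = μ.map (S n) := by
    rw [hκ, Measure.map_map measurable_fst hpair]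
    rfl
  have hsnd : κ.map Prod.snd = μ.map ξlim := by
    rw [hκ, Measure.map_map measurable_snd hpair]
    rfl
  have hW : wasserstein2 (μ.map (S n)) (μ.map ξlim)
      ≤ (∫⁻ p : G × G, ENNReal.ofReal (‖p.1 - p.2‖ ^ 2) ∂κ) ^ (1 / 2 : ℝ) := by
    rw [wasserstein2]
    refine iInf_le_of_le κ ?_
    refine iInf_le_of_le hfst ?_
    exact iInf_le _ hsnd
  have hcost1 : (∫⁻ p : G × G, ENNReal.ofReal (‖p.1 - p.2‖ ^ 2) ∂κ)
      ≤ ∫⁻ ω, ENNReal.ofReal (‖S n ω - ξlim ω‖ ^ 2) ∂μ := by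
    rw [hκ]
    exact lintegral_map_le _ _
  set g : ℕ → Ω → ENNReal := fun m ω =>
    ∑ k ∈ Finset.Ioc n m, ENNReal.ofReal (‖ξ k ω‖ ^ 2 * (1 / (1 + (k : ℝ) ^ 2))) with hg
  have hkmeas : ∀ k : ℕ, Measurable fun ω =>
      ENNReal.ofReal (‖ξ k ω‖ ^ 2 * (1 / (1 + (k : ℝ) ^ 2))) := by
    intro k
    exact (((hmeas k).norm.pow_const 2).mul_const _).ennreal_ofReal
  have hgmeas : ∀ m, Measurable (g m) := by
    intro m
    exact Finset.measurable_sum _ fun k _ => hkmeas k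
  have hdiff : ∀ m, n ≤ m → ∀ ω : Ω, ENNReal.ofReal (‖S m ω - S n ω‖ ^ 2) = g m ω := by
    intro m hm ω
    have hsplit : S m ω - S n ω = ∑ k ∈ Finset.Ioc n m, ξ k ω • f k := by
      simp only [hS]
      rw [Finset.range_eq_Ico, Finset.range_eq_Ico]
      have hsum := Finset.sum_Ico_consecutive (fun k => ξ k ω • f k)
        (Nat.zero_le (n + 1)) (by omega : n + 1 ≤ m + 1)
      rw [Finset.Ico_add_one_add_one_eq_Ioc] at hsum
      rw [← hsum]
      abel
    rw [hsplit, norm_sum_sq_eq hf, hg]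
    exact ENNReal.ofReal_sum_of_nonneg fun k _ => by positivity
  have hae : ∀ᵐ ω ∂μ, ENNReal.ofReal (‖S n ω - ξlim ω‖ ^ 2)
      = liminf (fun m => g m ω) atTop := by
    filter_upwards [htendsto] with ω hω
    have hω' : Tendsto (fun m => S m ω) atTop (nhds (ξlim ω)) := hω
    have h1 : Tendsto (fun m => ENNReal.ofReal (‖S m ω - S n ω‖ ^ 2)) atTop
        (nhds (ENNReal.ofReal (‖ξlim ω - S n ω‖ ^ 2))) :=
      (ENNReal.continuous_ofReal.tendsto _).comp
        (((hω'.sub_const (S n ω)).norm).pow 2)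
    have h2 : Tendsto (fun m => g m ω) atTop
        (nhds (ENNReal.ofReal (‖ξlim ω - S n ω‖ ^ 2))) := by
      refine h1.congr' ?_
      filter_upwards [eventually_ge_atTop n] with m hm
      exact hdiff m hm ω
    rw [norm_sub_rev]
    exact (h2.liminf_eq).symm
  have hcost2 : ∫⁻ ω, ENNReal.ofReal (‖S n ω - ξlim ω‖ ^ 2) ∂μ
      ≤ ENNReal.ofReal (1 / (n : ℝ)) := by
    rw [lintegral_congr_ae hae]
    refine le_trans (lintegral_liminf_le hgmeas) ?_
    have hbound : ∀ m, ∫⁻ ω, g m ω ∂μ ≤ ENNReal.ofReal (1 / (n : ℝ)) := by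
      intro m
      simp only [hg]
      rw [lintegral_finset_sum _ fun k _ => hkmeas k]
      have hone : ∀ k : ℕ, ∫⁻ ω, ENNReal.ofReal (‖ξ k ω‖ ^ 2 * (1 / (1 + (k : ℝ) ^ 2))) ∂μ
          = ENNReal.ofReal (1 / (1 + (k : ℝ) ^ 2)) := by
        intro k
        have hmul : ∀ ω : Ω, ENNReal.ofReal (‖ξ k ω‖ ^ 2 * (1 / (1 + (k : ℝ) ^ 2)))
            = ENNReal.ofReal (‖ξ k ω‖ ^ 2) * ENNReal.ofReal (1 / (1 + (k : ℝ) ^ 2)) :=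
          fun ω => ENNReal.ofReal_mul (by positivity)
        simp_rw [hmul]
        rw [lintegral_mul_const _ ((hmeas k).norm.pow_const 2).ennreal_ofReal]
        have hlint : ∫⁻ ω, ENNReal.ofReal (‖ξ k ω‖ ^ 2) ∂μ = 1 := by
          have h := lintegral_map (μ := μ) (g := ξ k)
            (by fun_prop : Measurable fun z : ℂ => ENNReal.ofReal (‖z‖ ^ 2)) (hmeas k)
          rw [hlaw k, lintegral_normSq_stdComplexGaussian] at h
          exact h.symm
        rw [hlint, one_mul]
      rw [Finset.sum_congr rfl fun k _ => hone k,
        ← ENNReal.ofReal_sum_of_nonneg fun k _ => by positivity]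
      exact ENNReal.ofReal_le_ofReal (sum_Ioc_le_inv hn m)
    calc liminf (fun m => ∫⁻ ω, g m ω ∂μ) atTop
        ≤ liminf (fun _ : ℕ => ENNReal.ofReal (1 / (n : ℝ))) atTop :=
          liminf_le_liminf (Eventually.of_forall hbound)
      _ = ENNReal.ofReal (1 / (n : ℝ)) := liminf_const _
  refine le_trans hW ?_
  refine le_trans (ENNReal.rpow_le_rpow (le_trans hcost1 hcost2)
    (by norm_num : (0:ℝ) ≤ 1 / 2)) ?_
  rw [ENNReal.ofReal_rpow_of_nonneg (by positivity) (by norm_num)]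
  apply le_of_eq
  congr 1
  rw [← Real.sqrt_eq_rpow, one_div, one_div, Real.sqrt_inv]
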